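/- Let ρ^{ab}_p = (1−p)·I/9 + p·|Ω⟩⟨Ω| on ℂ³⊗ℂ³ where |Ω⟩ = (|00⟩+|11⟩+|22⟩)/√3 and 0 ≤ p ≤ 1. With {A_j}_{j=1}^9 the standard orthonormal Hermitian basis of 3×3 matrices, the total variance satisfies ∑_{j=1}^9 V(ρ^{ab}_p, A_j⊗I + I⊗A_j) = 16/3 + (4/3)p, where V(ρ,H) = tr(ρH²) − (tr ρH)². In particular this quantity is ≥ 16/3 > 4 for all p, so the variance-based criterion never detects entanglement of ρ^{ab}_p. -/

import Mathlib

open scoped Kronecker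

noncomputable section

/-- The maximally entangled vector `|Ω⟩ = (|00⟩+|11⟩+|22⟩)/√3` in `ℂ³⊗ℂ³`. -/
def OmegaVec : Fin 3 × Fin 3 → ℂ :=
  fun p => if p.1 = p.2 then (1 / (Real.sqrt 3 : ℂ)) else 0

/-- The isotropic state `ρ_p = (1-p)·I/9 + p·|Ω⟩⟨Ω|` on `ℂ³⊗ℂ³`. -/
def rhoP (p : ℝ) : Matrix (Fin 3 × Fin 3) (Fin 3 × Fin 3) ℂ :=
  ((1 - p : ℂ) / 9) • (1 : Matrix (Fin 3 × Fin 3) (Fin 3 × Fin 3) ℂ)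
    + (p : ℂ) • Matrix.vecMulVec OmegaVec (fun q => star (OmegaVec q))

/-- The standard orthonormal Hermitian basis of the `3×3` matrices. -/
def stdHermBasis : Fin 9 → Matrix (Fin 3) (Fin 3) ℂ :=
  ![Matrix.single 0 0 1,
    Matrix.single 1 1 1,
    Matrix.single 2 2 1,
    ((Real.sqrt 2 : ℂ))⁻¹ • (Matrix.single 0 1 1 + Matrix.single 1 0 1),
    ((Real.sqrt 2 : ℂ))⁻¹ • (Matrix.single 0 2 1 + Matrix.single 2 0 1),
    ((Real.sqrt 2 : ℂ))⁻¹ • (Matrix.single 1 2 1 + Matrix.single 2 1 1),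
    (Complex.I * ((Real.sqrt 2 : ℂ))⁻¹) • (Matrix.single 0 1 1 - Matrix.single 1 0 1),
    (Complex.I * ((Real.sqrt 2 : ℂ))⁻¹) • (Matrix.single 0 2 1 - Matrix.single 2 0 1),
    (Complex.I * ((Real.sqrt 2 : ℂ))⁻¹) • (Matrix.single 1 2 1 - Matrix.single 2 1 1)]

/-- The variance `V(ρ,H) = tr(ρH²) − (tr ρH)²`. -/
def matVariance (ρ H : Matrix (Fin 3 × Fin 3) (Fin 3 × Fin 3) ℂ) : ℂ :=
  (ρ * (H * H)).trace - ((ρ * H).trace) ^ 2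

lemma key (p : ℝ) (X Y : Matrix (Fin 3) (Fin 3) ℂ) :
    (rhoP p * (X ⊗ₖ Y)).trace
      = ((1 - p : ℂ)/9) * (X.trace * Y.trace)
        + ((p:ℂ)/3) * ∑ i, ∑ j, X i j * Y i j := by
  have h3 : (1/(Real.sqrt 3:ℂ)) * (1/(Real.sqrt 3:ℂ)) = 1/3 := by
    rw [div_mul_div_comm, one_mul, ← Complex.ofReal_mul, Real.mul_self_sqrt (by norm_num)]; norm_num
  rw [rhoP, Matrix.add_mul, Matrix.smul_mul, Matrix.smul_mul, Matrix.one_mul,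
      Matrix.trace_add, Matrix.trace_smul, Matrix.trace_smul, Matrix.trace_kronecker]
  have hv : (Matrix.vecMulVec OmegaVec (fun q => star (OmegaVec q)) * (X ⊗ₖ Y)).trace
      = (1/3 : ℂ) * ∑ i, ∑ j, X i j * Y i j := by
    simp only [Matrix.trace, Matrix.diag_apply, Matrix.mul_apply, Matrix.vecMulVec_apply,
      OmegaVec, Matrix.kroneckerMap_apply, Fintype.sum_prod_type, Fin.sum_univ_three]
    have h3a : ((Real.sqrt 3:ℂ))⁻¹ * ((Real.sqrt 3:ℂ))⁻¹ = 1/3 := by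
      rw [← mul_inv, ← Complex.ofReal_mul, Real.mul_self_sqrt (by norm_num)]; norm_num
    have h3b : ((Real.sqrt 3:ℂ))⁻¹ ^ 2 = 1/3 := by rw [sq]; exact h3a
    simp [Complex.conj_ofReal, h3a, h3b]
    ring
  rw [hv, smul_eq_mul, smul_eq_mul]
  ring

lemma sum_mul_one (X : Matrix (Fin 3) (Fin 3) ℂ) :
    ∑ i, ∑ j, X i j * (1 : Matrix (Fin 3) (Fin 3) ℂ) i j = X.trace := by
  simp [Matrix.one_apply, Matrix.trace, Matrix.diag, Fin.sum_univ_three]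

lemma sum_one_mul (X : Matrix (Fin 3) (Fin 3) ℂ) :
    ∑ i, ∑ j, (1 : Matrix (Fin 3) (Fin 3) ℂ) i j * X i j = X.trace := by
  simp [Matrix.one_apply, Matrix.trace, Matrix.diag, Fin.sum_univ_three]

lemma var_formula (p : ℝ) (A : Matrix (Fin 3) (Fin 3) ℂ) :
    matVariance (rhoP p)
        (A ⊗ₖ (1 : Matrix (Fin 3) (Fin 3) ℂ) + (1 : Matrix (Fin 3) (Fin 3) ℂ) ⊗ₖ A)
      = ((1 - p : ℂ)/9) * (6 * (A*A).trace + 2 * A.trace^2)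
        + ((p:ℂ)/3) * (2*(A*A).trace + 2 * ∑ i, ∑ j, A i j * A i j)
        - ((2/3 : ℂ) * A.trace)^2 := by
  have hsq : (A ⊗ₖ (1 : Matrix (Fin 3) (Fin 3) ℂ) + (1 : Matrix (Fin 3) (Fin 3) ℂ) ⊗ₖ A)
        * (A ⊗ₖ (1 : Matrix (Fin 3) (Fin 3) ℂ) + (1 : Matrix (Fin 3) (Fin 3) ℂ) ⊗ₖ A)
      = (A*A) ⊗ₖ (1 : Matrix (Fin 3) (Fin 3) ℂ) + (A ⊗ₖ A
          + (A ⊗ₖ A + (1 : Matrix (Fin 3) (Fin 3) ℂ) ⊗ₖ (A*A))) := by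
    simp only [Matrix.add_mul, Matrix.mul_add, ← Matrix.mul_kronecker_mul,
      Matrix.one_mul, Matrix.mul_one, add_assoc]
  rw [matVariance, hsq]
  simp only [Matrix.mul_add, Matrix.trace_add]
  simp only [key, sum_mul_one, sum_one_mul, Matrix.trace_one, Fintype.card_fin, Nat.cast_ofNat]
  ring

/-- For the isotropic state `ρ_p` on `ℂ³⊗ℂ³`, the total variance over the local
observable basis is `∑_j V(ρ_p, A_j⊗I + I⊗A_j) = 16/3 + (4/3)p ≥ 16/3 > 4`, so
the variance criterion never detects the entanglement of `ρ_p`. -/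
theorem total_variance_isotropic (p : ℝ) (hp0 : 0 ≤ p) (hp1 : p ≤ 1) :
    (∑ j : Fin 9, matVariance (rhoP p)
        ((stdHermBasis j) ⊗ₖ (1 : Matrix (Fin 3) (Fin 3) ℂ)
          + (1 : Matrix (Fin 3) (Fin 3) ℂ) ⊗ₖ (stdHermBasis j))
      = (16 / 3 : ℂ) + (4 / 3 : ℂ) * (p : ℂ)) ∧
    (4 : ℝ) < 16 / 3 + (4 / 3) * p := by
  constructor
  · have h2a : ((Real.sqrt 2:ℂ))⁻¹ * ((Real.sqrt 2:ℂ))⁻¹ = 1/2 := by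
      rw [← mul_inv, ← Complex.ofReal_mul, Real.mul_self_sqrt (by norm_num)]; norm_num
    have h2b : ((Real.sqrt 2:ℂ))⁻¹ ^ 2 = 1/2 := by rw [sq]; exact h2a
    simp only [var_formula]
    simp only [Fin.sum_univ_succ, Fin.sum_univ_zero, stdHermBasis,
      Matrix.cons_val_zero, Matrix.cons_val_one, Matrix.head_cons, Matrix.cons_val_succ]
    simp [Matrix.trace, Matrix.diag, Matrix.mul_apply, Matrix.single,
      Matrix.smul_apply, Matrix.add_apply, Matrix.sub_apply, Matrix.of_apply,
      Fin.sum_univ_three, h2a, h2b, Complex.I_sq]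
    ring_nf
    simp only [Complex.I_sq, h2b]
    ring
  · nlinarith

end
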